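/- Let n = 2^s·m with 2^s ≥ 4, gcd(2^s, m) = 1 (m odd). Suppose α is a normal element of F_{2^{2^s}} over F_2 with corresponding vector (a_0,...,a_{2^s-1}) and β is a normal element of F_{2^m} over F_2 with corresponding vector (b_0,...,b_{m-1}). Then γ = αβ is a normal element of F_{2^n} over F_2, and its corresponding vector (c_0,...,c_{n-1}) satisfies c_k = a_{k mod 2^s} · b_{k mod m} for all 0 ≤ k ≤ n-1. -/

import Mathlib

open Polynomial Finset

/-- Cyclic convolution: multiplication in `F[x]/(x^n - 1)` on coefficient vectors. -/
def cconv (n : ℕ) [NeZero n] {F : Type*} [CommRing F] (a b : ZMod n → F) : ZMod n → F :=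
  fun k => ∑ i : ZMod n, a i * b (k - i)

/-- Reciprocal polynomial `g*(z) = Σ b_i z^{n-i}` on coefficient vectors. -/
def cstar (n : ℕ) {F : Type*} (a : ZMod n → F) : ZMod n → F := fun i => a (-i)

/-- The polynomial `Σ_{i=0}^{n-1} a_i x^i` attached to a coefficient vector. -/
noncomputable def toPoly (n : ℕ) [NeZero n] {F : Type*} [CommRing F] (a : ZMod n → F) : Polynomial F :=
  ∑ i : Fin n, Polynomial.C (a ((i : ℕ) : ZMod n)) * Polynomial.X ^ (i : ℕ)

lemma zmod2_sq : ∀ r : ZMod 2, r ^ 2 = r := by decide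

lemma algebraMap_trace_eq_sum_pow (E : Type*) [Field E] [Algebra (ZMod 2) E]
    [FiniteDimensional (ZMod 2) E] (x : E) :
    algebraMap (ZMod 2) E (Algebra.trace (ZMod 2) E x)
      = ∑ i ∈ Finset.range (Module.finrank (ZMod 2) E), x ^ 2 ^ i := by
  haveI : Fintype E := Module.fintypeOfFintype (Module.finBasis (ZMod 2) E)
  set d := Module.finrank (ZMod 2) E with hd
  have hcard : Fintype.card E = 2 ^ d := by
    have := Module.card_eq_pow_finrank (K := ZMod 2) (V := E); simpa using this
  haveI : CharP E 2 := charP_of_injective_algebraMap (algebraMap (ZMod 2) E).injective 2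
  haveI : Fact (Nat.Prime 2) := ⟨Nat.prime_two⟩
  -- the Frobenius as an algebra automorphism
  let fh : E →ₐ[ZMod 2] E :=
    { toFun := fun y => y ^ 2
      map_one' := one_pow 2
      map_mul' := fun a b => mul_pow a b 2
      map_zero' := zero_pow (by norm_num)
      map_add' := fun a b => add_pow_char a b 2
      commutes' := fun r => by
        show (algebraMap (ZMod 2) E r) ^ 2 = algebraMap (ZMod 2) E r
        rw [← map_pow, zmod2_sq r] }
  have hinj : Function.Injective fh := fh.toRingHom.injective
  let φ : E ≃ₐ[ZMod 2] E :=
    AlgEquiv.ofBijective fh ⟨hinj, Finite.surjective_of_injective hinj⟩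
  have hφ : ∀ y : E, φ y = y ^ 2 := fun _ => rfl
  have hφpow : ∀ (i : ℕ) (y : E), (φ ^ i) y = y ^ 2 ^ i := by
    intro i
    induction i with
    | zero => intro y; simp
    | succ i ih =>
      intro y
      rw [pow_succ', AlgEquiv.mul_apply, hφ, ih, ← pow_mul, ← pow_succ]
  -- lower bound for exponents killing φ
  have hgen : ∀ t : ℕ, 0 < t → (φ : E ≃ₐ[ZMod 2] E) ^ t = 1 → d ≤ t := by
    intro t ht h1
    obtain ⟨g, hg⟩ := IsCyclic.exists_generator (α := Eˣ)
    have hge : (g : E) ^ 2 ^ t = (g : E) := by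
      have := congrArg (fun σ : E ≃ₐ[ZMod 2] E => σ (g : E)) h1
      simpa [hφpow] using this
    have hgu : g ^ 2 ^ t = g := Units.ext (by push_cast; exact hge)
    have h2 : g ^ (2 ^ t - 1) * g ^ 1 = 1 * g ^ 1 := by
      rw [← pow_add, one_mul]
      simpa [Nat.sub_add_cancel (Nat.one_le_two_pow)] using hgu
    have h3 : g ^ (2 ^ t - 1) = 1 := mul_right_cancel h2
    have h4 : orderOf g ∣ 2 ^ t - 1 := orderOf_dvd_of_pow_eq_one h3
    have h5 : orderOf g = 2 ^ d - 1 := by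
      classical
      rw [orderOf_eq_card_of_forall_mem_zpowers hg, Nat.card_eq_fintype_card,
        Fintype.card_units, hcard]
    have htpos : (2:ℕ) ≤ 2 ^ t := by
      calc (2:ℕ) = 2 ^ 1 := by norm_num
      _ ≤ 2 ^ t := Nat.pow_le_pow_right (by norm_num) ht
    have h6 : 2 ^ d - 1 ≤ 2 ^ t - 1 := by
      rw [← h5]
      exact Nat.le_of_dvd (by omega) h4
    have hdpos : (1:ℕ) ≤ 2 ^ d := Nat.one_le_two_pow
    have : (2:ℕ) ^ d ≤ 2 ^ t := by omega
    exact (Nat.pow_le_pow_iff_right (by norm_num)).1 this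
  -- i ↦ φ ^ i is a bijection from Fin d onto the automorphism group
  have hbij : Function.Bijective (fun i : Fin d => φ ^ (i : ℕ)) := by
    rw [Fintype.bijective_iff_injective_and_card]
    constructor
    · intro i j hij
      rcases le_total (i : ℕ) (j : ℕ) with h | h
      · have : φ ^ ((j : ℕ) - (i : ℕ)) * φ ^ (i : ℕ) = 1 * φ ^ (i : ℕ) := by
          rw [← pow_add, one_mul, Nat.sub_add_cancel h]; exact hij.symm
        have h0 := mul_right_cancel this
        by_contra hne
        have hlt : 0 < (j : ℕ) - (i : ℕ) := by
          have : (i : ℕ) ≠ (j : ℕ) := fun hc => hne (Fin.ext hc)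
          omega
        have := hgen _ hlt h0
        omega
      · have : φ ^ ((i : ℕ) - (j : ℕ)) * φ ^ (j : ℕ) = 1 * φ ^ (j : ℕ) := by
          rw [← pow_add, one_mul, Nat.sub_add_cancel h]; exact hij
        have h0 := mul_right_cancel this
        by_contra hne
        have hlt : 0 < (i : ℕ) - (j : ℕ) := by
          have : (i : ℕ) ≠ (j : ℕ) := fun hc => hne (Fin.ext hc)
          omega
        have := hgen _ hlt h0
        omega
    · simp [IsGalois.card_aut_eq_finrank]; rw [← Nat.card_eq_fintype_card, IsGalois.card_aut_eq_finrank]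
  rw [trace_eq_sum_automorphisms]
  calc ∑ σ : E ≃ₐ[ZMod 2] E, σ x
      = ∑ i : Fin d, (φ ^ (i : ℕ)) x :=
        (Fintype.sum_bijective _ hbij (fun i : Fin d => (φ ^ (i : ℕ)) x)
          (fun σ : E ≃ₐ[ZMod 2] E => σ x) (fun i => rfl)).symm
    _ = ∑ i ∈ range d, x ^ 2 ^ i := by
        rw [← Fin.sum_univ_eq_sum_range (fun i => x ^ 2 ^ i) d]
        exact Finset.sum_congr rfl fun i _ => hφpow i x

lemma pow_two_pow_mod (E : Type*) [Field E] [Fintype E] {d : ℕ}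
    (hcard : Fintype.card E = 2 ^ d) (y : E) (t : ℕ) :
    y ^ 2 ^ t = y ^ 2 ^ (t % d) := by
  conv_lhs => rw [← Nat.mod_add_div t d]
  rw [pow_add, pow_mul (2:ℕ), pow_mul, ← hcard, FiniteField.pow_card_pow]

lemma crt_bijective {p q : ℕ} (hp : 0 < p) (hq : 0 < q) (h : Nat.Coprime p q) :
    Function.Bijective (fun j : Fin (p * q) =>
      ((⟨(j : ℕ) % p, Nat.mod_lt _ hp⟩ : Fin p), (⟨(j : ℕ) % q, Nat.mod_lt _ hq⟩ : Fin q))) := by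
  rw [Fintype.bijective_iff_injective_and_card]
  refine ⟨?_, by simp⟩
  intro j₁ j₂ hj
  rw [Prod.mk.injEq, Fin.mk.injEq, Fin.mk.injEq] at hj
  have hmod : (j₁ : ℕ) ≡ (j₂ : ℕ) [MOD p * q] :=
    (Nat.modEq_and_modEq_iff_modEq_mul h).1 ⟨hj.1, hj.2⟩
  exact Fin.ext (by
    rwa [Nat.ModEq, Nat.mod_eq_of_lt j₁.isLt, Nat.mod_eq_of_lt j₂.isLt] at hmod)

lemma sum_crt {R : Type*} [AddCommMonoid R] {p q : ℕ} (hp : 0 < p) (hq : 0 < q)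
    (h : Nat.Coprime p q) (F : ℕ → ℕ → R) :
    ∑ j ∈ Finset.range (p * q), F (j % p) (j % q)
      = ∑ u ∈ Finset.range p, ∑ v ∈ Finset.range q, F u v := by
  rw [← Fin.sum_univ_eq_sum_range (fun j => F (j % p) (j % q)) (p * q)]
  rw [Fintype.sum_bijective _ (crt_bijective hp hq h) _
    (fun w : Fin p × Fin q => F (w.1 : ℕ) (w.2 : ℕ)) (fun j => rfl)]
  rw [Fintype.sum_prod_type]
  rw [← Fin.sum_univ_eq_sum_range (fun u => ∑ v ∈ Finset.range q, F u v) p]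
  exact Finset.sum_congr rfl fun u _ =>
    (Fin.sum_univ_eq_sum_range (fun v => F (u : ℕ) v) q)

set_option maxHeartbeats 1000000 in
theorem stmt_17 (s m n : ℕ) (hs : 2 ≤ s) (hm : Odd m) (hn : n = 2 ^ s * m)
    (L M K : Type*) [Field L] [Field M] [Field K]
    [Algebra (ZMod 2) L] [Algebra (ZMod 2) M] [Algebra (ZMod 2) K]
    [Algebra L K] [Algebra M K]
    [IsScalarTower (ZMod 2) L K] [IsScalarTower (ZMod 2) M K]
    [FiniteDimensional (ZMod 2) L] [FiniteDimensional (ZMod 2) M]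
    [FiniteDimensional (ZMod 2) K]
    (hK : Module.finrank (ZMod 2) K = n) (hL : Module.finrank (ZMod 2) L = 2 ^ s)
    (hM : Module.finrank (ZMod 2) M = m)
    (α : L) (β : M)
    (hα : ∃ b : Module.Basis (Fin (2 ^ s)) (ZMod 2) L, ∀ i : Fin (2 ^ s), b i = α ^ 2 ^ (i : ℕ))
    (hβ : ∃ b : Module.Basis (Fin m) (ZMod 2) M, ∀ i : Fin m, b i = β ^ 2 ^ (i : ℕ)) :
    (∃ b : Module.Basis (Fin n) (ZMod 2) K,
        ∀ i : Fin n, b i = (algebraMap L K α * algebraMap M K β) ^ 2 ^ (i : ℕ)) ∧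
      ∀ k < n,
        Algebra.trace (ZMod 2) K
            ((algebraMap L K α * algebraMap M K β) *
              (algebraMap L K α * algebraMap M K β) ^ 2 ^ k)
          = Algebra.trace (ZMod 2) L (α * α ^ 2 ^ (k % 2 ^ s)) *
              Algebra.trace (ZMod 2) M (β * β ^ 2 ^ (k % m)) := by
  subst hn
  haveI : Fintype L := Module.fintypeOfFintype (Module.finBasis (ZMod 2) L)
  haveI : Fintype M := Module.fintypeOfFintype (Module.finBasis (ZMod 2) M)
  have hcardL : Fintype.card L = 2 ^ 2 ^ s := by
    have := Module.card_eq_pow_finrank (K := ZMod 2) (V := L); rw [hL] at this; simpa using this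
  have hcardM : Fintype.card M = 2 ^ m := by
    have := Module.card_eq_pow_finrank (K := ZMod 2) (V := M); rw [hM] at this; simpa using this
  have hp : 0 < 2 ^ s := Nat.pow_pos (by norm_num)
  have hq : 0 < m := hm.pos
  have hcop : Nat.Coprime (2 ^ s) m := Nat.Coprime.pow_left s (Nat.coprime_two_left.mpr hm)
  have redα : ∀ (y : L) (t : ℕ), y ^ 2 ^ t = y ^ 2 ^ (t % 2 ^ s) :=
    fun y t => pow_two_pow_mod L hcardL y t
  have redβ : ∀ (y : M) (t : ℕ), y ^ 2 ^ t = y ^ 2 ^ (t % m) :=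
    fun y t => pow_two_pow_mod M hcardM y t
  have hγpow : ∀ t : ℕ, (algebraMap L K α * algebraMap M K β) ^ 2 ^ t
      = algebraMap L K (α ^ 2 ^ (t % 2 ^ s)) * algebraMap M K (β ^ 2 ^ (t % m)) := by
    intro t
    rw [mul_pow, ← map_pow, ← map_pow, redα α t, redβ β t]
  constructor
  · -- normality
    obtain ⟨bL, hbL⟩ := hα
    obtain ⟨bM, hbM⟩ := hβ
    let fL : L →ₐ[ZMod 2] K := IsScalarTower.toAlgHom (ZMod 2) L K
    let A : IntermediateField (ZMod 2) K := fL.fieldRange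
    let e : L ≃ₐ[ZMod 2] fL.range := AlgEquiv.ofInjectiveField fL
    have hA : Module.finrank (ZMod 2) A = 2 ^ s := by
      rw [← hL]; exact e.toLinearEquiv.finrank_eq.symm
    have hdisj : A.LinearDisjoint M :=
      IntermediateField.LinearDisjoint.of_finrank_coprime (by rw [hA, hM]; exact hcop)
    have haLI : LinearIndependent (ZMod 2) (fun u : Fin (2 ^ s) => e (bL u)) :=
      bL.linearIndependent.map' _ e.toLinearEquiv.ker
    have hmul := hdisj.linearIndependent_mul' haLI bM.linearIndependent
    have hcomp := hmul.comp _ (crt_bijective hp hq hcop).injective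
    have hfg : ((fun i : Fin (2 ^ s) × Fin m => ((e (bL i.1) : K) * algebraMap M K (bM i.2))) ∘
        (fun j : Fin (2 ^ s * m) =>
          ((⟨(j : ℕ) % 2 ^ s, Nat.mod_lt _ hp⟩ : Fin (2 ^ s)),
           (⟨(j : ℕ) % m, Nat.mod_lt _ hq⟩ : Fin m))))
        = fun j : Fin (2 ^ s * m) =>
            (algebraMap L K α * algebraMap M K β) ^ 2 ^ (j : ℕ) := by
      funext j
      show (e (bL ⟨(j : ℕ) % 2 ^ s, Nat.mod_lt _ hp⟩) : K) *
          algebraMap M K (bM ⟨(j : ℕ) % m, Nat.mod_lt _ hq⟩) = _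
      rw [hγpow (j : ℕ), hbL, hbM]
      congr 1
    have hg : LinearIndependent (ZMod 2)
        (fun j : Fin (2 ^ s * m) => (algebraMap L K α * algebraMap M K β) ^ 2 ^ (j : ℕ)) := by
      rw [← hfg]; exact hcomp
    haveI : Nonempty (Fin (2 ^ s * m)) := ⟨⟨0, Nat.mul_pos hp hq⟩⟩
    refine ⟨basisOfLinearIndependentOfCardEqFinrank hg (by simp [hK]), fun i => ?_⟩
    rw [coe_basisOfLinearIndependentOfCardEqFinrank]
  · -- the traces
    intro k hk
    apply (algebraMap (ZMod 2) K).injective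
    rw [algebraMap_trace_eq_sum_pow K, hK, map_mul,
      IsScalarTower.algebraMap_apply (ZMod 2) L K, algebraMap_trace_eq_sum_pow L, hL, map_sum,
      IsScalarTower.algebraMap_apply (ZMod 2) M K, algebraMap_trace_eq_sum_pow M, hM, map_sum,
      sum_mul_sum,
      ← sum_crt hp hq hcop (fun u v => algebraMap L K ((α * α ^ 2 ^ (k % 2 ^ s)) ^ 2 ^ u) *
          algebraMap M K ((β * β ^ 2 ^ (k % m)) ^ 2 ^ v))]
    refine Finset.sum_congr rfl fun j _ => ?_
    have eA : (α * α ^ 2 ^ (k % 2 ^ s)) ^ 2 ^ (j % 2 ^ s)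
        = α ^ 2 ^ (j % 2 ^ s) * α ^ 2 ^ ((k + j) % 2 ^ s) := by
      rw [mul_pow]
      congr 1
      rw [← pow_mul, ← pow_add, redα α (k % 2 ^ s + j % 2 ^ s), ← Nat.add_mod]
    have eB : (β * β ^ 2 ^ (k % m)) ^ 2 ^ (j % m)
        = β ^ 2 ^ (j % m) * β ^ 2 ^ ((k + j) % m) := by
      rw [mul_pow]
      congr 1
      rw [← pow_mul, ← pow_add, redβ β (k % m + j % m), ← Nat.add_mod]
    have e1 : ((algebraMap L K α * algebraMap M K β) *
        (algebraMap L K α * algebraMap M K β) ^ 2 ^ k) ^ 2 ^ j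
        = (algebraMap L K α * algebraMap M K β) ^ 2 ^ j *
          (algebraMap L K α * algebraMap M K β) ^ 2 ^ (k + j) := by
      rw [mul_pow]
      congr 1
      rw [← pow_mul, ← pow_add]
    rw [e1, hγpow j, hγpow (k + j), eA, eB, map_mul, map_mul]
    ring
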